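/- Let ω ∈ C([0,T]) with ω₀ = 0 and b : ℝ → ℝ measurable with b(0) = 0. If y : [0,T] → ℝ is continuous and satisfies y_t = ∫₀ᵗ b(y_s + ω_s) ds for all t, and b is nonnegative and non-decreasing on [0,∞), b non-increasing on (-∞,0], and b(|x|) ≤ b(-|x|) for all x, then y is non-negative and non-decreasing on [0,T]. -/
import Mathlib


open MeasureTheory intervalIntegral

/-- Under H1, H2 (with nonnegativity), H4, H5, any continuous solution of
`y t = ∫₀ᵗ b (y s + ω s) ds` is non-negative and non-decreasing on `[0,T]`. -/
theorem stmt0 (T : ℝ) (hT : 0 ≤ T) (b : ℝ → ℝ) (hbmeas : Measurable b)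
    (hb0 : b 0 = 0)
    (hbnonneg : ∀ x, 0 ≤ x → 0 ≤ b x)
    (hbmono : MonotoneOn b (Set.Ici (0 : ℝ)))
    (hbanti : AntitoneOn b (Set.Iic (0 : ℝ)))
    (hb4 : ∀ x : ℝ, b |x| ≤ b (-|x|))
    (ω : ℝ → ℝ) (hω : ContinuousOn ω (Set.Icc 0 T)) (hω0 : ω 0 = 0)
    (y : ℝ → ℝ) (hy : ContinuousOn y (Set.Icc 0 T))
    (hsol : ∀ t ∈ Set.Icc (0 : ℝ) T, y t = ∫ s in (0 : ℝ)..t, b (y s + ω s)) :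
    (∀ t ∈ Set.Icc (0 : ℝ) T, 0 ≤ y t) ∧ MonotoneOn y (Set.Icc (0 : ℝ) T) := by
  -- b is nonnegative everywhere
  have hbpos : ∀ x, 0 ≤ b x := by
    intro x
    rcases le_or_gt 0 x with h | h
    · exact hbnonneg x h
    · have := hbanti (Set.mem_Iic.2 h.le) (Set.mem_Iic.2 le_rfl) h.le
      simpa [hb0] using this
  -- the function g = y + ω is continuous on [0,T]
  set g : ℝ → ℝ := fun s => y s + ω s with hg
  have hgc : ContinuousOn g (Set.Icc 0 T) := hy.add hω
  -- g is bounded on [0,T]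
  obtain ⟨M, hM⟩ := (isCompact_Icc).exists_bound_of_continuousOn hgc
  have hM0 : 0 ≤ M := le_trans (norm_nonneg _) (hM 0 ⟨le_rfl, hT⟩)
  -- b ∘ g is bounded on [0,T]
  set C : ℝ := max (b M) (b (-M)) with hC
  have hbound : ∀ s ∈ Set.Icc (0 : ℝ) T, b (g s) ≤ C := by
    intro s hs
    have habs : |g s| ≤ M := by simpa using hM s hs
    rcases le_or_gt 0 (g s) with h | h
    · exact le_trans (hbmono (Set.mem_Ici.2 h) (Set.mem_Ici.2 hM0)
        ((le_abs_self _).trans habs)) (le_max_left _ _)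
    · exact le_trans (hbanti (Set.mem_Iic.2 (by linarith [abs_le.1 habs]))
        (Set.mem_Iic.2 h.le) (by linarith [abs_le.1 habs])) (le_max_right _ _)
  -- b ∘ g is integrable on [0,T]
  have hmeasg : AEMeasurable g (volume.restrict (Set.Icc (0:ℝ) T)) :=
    (hgc.aemeasurable measurableSet_Icc)
  have hmeasf : AEStronglyMeasurable (fun s => b (g s))
      (volume.restrict (Set.Icc (0:ℝ) T)) :=
    (hbmeas.comp_aemeasurable hmeasg).aestronglyMeasurable
  have hint : IntegrableOn (fun s => b (g s)) (Set.Icc 0 T) := by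
    refine Integrable.mono' (integrable_const C) hmeasf ?_
    filter_upwards [ae_restrict_mem measurableSet_Icc] with s hs
    rw [Real.norm_eq_abs, abs_of_nonneg (hbpos _)]
    exact hbound s hs
  -- interval integrability on subintervals
  have hII : ∀ s t : ℝ, 0 ≤ s → t ≤ T → s ≤ t →
      IntervalIntegrable (fun u => b (g u)) volume s t := by
    intro s t hs ht hst
    rw [intervalIntegrable_iff_integrableOn_Ioc_of_le hst]
    exact hint.mono_set (fun u hu => ⟨le_trans hs hu.1.le, le_trans hu.2 ht⟩)
  constructor
  · intro t ht
    rw [hsol t ht]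
    exact intervalIntegral.integral_nonneg ht.1 (fun u _ => hbpos _)
  · intro s hs t ht hst
    have hadd : (∫ u in (0:ℝ)..s, b (g u)) + (∫ u in s..t, b (g u))
        = ∫ u in (0:ℝ)..t, b (g u) :=
      intervalIntegral.integral_add_adjacent_intervals
        (hII 0 s le_rfl (hst.trans ht.2) hs.1) (hII s t hs.1 ht.2 hst)
    have h1 : y s = ∫ u in (0:ℝ)..s, b (g u) := hsol s hs
    have h2 : y t = ∫ u in (0:ℝ)..t, b (g u) := hsol t ht
    have h3 : 0 ≤ ∫ u in s..t, b (g u) :=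
      intervalIntegral.integral_nonneg hst (fun u _ => hbpos _)
    linarith [hadd]
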